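/- arXiv:1903.00255 — 2 statements merged into one kernel-verified Lean document; each statement's English description precedes it below -/
import Mathlib

section
/- For every integer k ≥ 2 and every integer n ≥ 1, the k-th absolute moment of X_n = log a_n with respect to the Gauss measure satisfies E_γ|X_n|^k ≤ (3/(2 log 2))·k!; in particular E_γ|X_n|^k ≤ k!·r̄^k where r̄ = √(3/(2 log 2)). -/
open MeasureTheory Set

noncomputable section

/-- The Gauss map `G(x) = 1/x - ⌊1/x⌋`. -/
def gaussMap (x : ℝ) : ℝ := 1 / x - (⌊1 / x⌋ : ℝ)

/-- The `n`-th partial quotient `a_n(ω) = ⌊1 / G^{n-1}(ω)⌋` (for `n ≥ 1`). -/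
def pq (ω : ℝ) (n : ℕ) : ℤ := ⌊1 / (gaussMap^[n - 1] ω)⌋

/-- The Gauss measure `dγ(x) = dx / ((1+x) log 2)` on `(0,1)`. -/
def gaussMeasure : Measure ℝ :=
  (volume.restrict (Ioo (0 : ℝ) 1)).withDensity
    (fun x => ENNReal.ofReal (1 / ((1 + x) * Real.log 2)))

/-- `M_n(ω) = a_1(ω) ⋯ a_n(ω)`. -/
def Mprod (ω : ℝ) (n : ℕ) : ℝ := ∏ j ∈ Finset.Icc 1 n, (pq ω j : ℝ)

/-- Khintchine's constant exponent `κ`. -/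
def kappa : ℝ := ∫ x in Ioo (0 : ℝ) 1, Real.log (⌊1 / x⌋ : ℝ) / ((1 + x) * Real.log 2)

def rbar : ℝ := Real.sqrt (3 / (2 * Real.log 2))

def Lambdabar : ℝ := 2.03

/-- `Ξ(T)`. -/
def Xi (T : ℝ) : ℝ :=
  Real.exp (-(T ^ 2) /
    (2 * (128 * rbar ^ 2 * Lambdabar + (16 * rbar * Lambdabar) ^ ((1 : ℝ) / 3) * T)
      ^ ((3 : ℝ) / 2)))

/-- The set `KL⁺(T, N)`. -/
def KLplus (T : ℝ) (N : ℕ) : Set ℝ :=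
  {ω | Irrational ω ∧ ω ∈ Ioo (0 : ℝ) 1 ∧
    ∀ n : ℕ, N ≤ n → Mprod ω n ≤ Real.exp ((kappa + T) * n)}

/-- The set `KL⁻(T, N)`. -/
def KLminus (T : ℝ) (N : ℕ) : Set ℝ :=
  {ω | Irrational ω ∧ ω ∈ Ioo (0 : ℝ) 1 ∧
    ∀ n : ℕ, N ≤ n → Real.exp ((kappa - T) * n) ≤ Mprod ω n}

end

/-- `X_n = log a_n`. -/
noncomputable def Xlog (ω : ℝ) (n : ℕ) : ℝ := Real.log (pq ω n : ℝ)

open scoped ENNReal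
open Filter

lemma measurable_gaussMap : Measurable gaussMap := by
  have h1 : Measurable fun x : ℝ => 1 / x := measurable_const.div measurable_id
  exact h1.sub (measurable_from_top.comp h1.floor)

lemma measurable_D : Measurable fun x : ℝ => ENNReal.ofReal (1 / ((1 + x) * Real.log 2)) := by
  apply ENNReal.measurable_ofReal.comp
  exact measurable_const.div ((measurable_const.add measurable_id).mul measurable_const)

lemma lintegral_gauss (f : ℝ → ℝ≥0∞) (hf : Measurable f) :
    ∫⁻ ω, f ω ∂gaussMeasure
      = ∫⁻ x in Ioo (0:ℝ) 1, ENNReal.ofReal (1 / ((1 + x) * Real.log 2)) * f x := by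
  rw [gaussMeasure, lintegral_withDensity_eq_lintegral_mul _ measurable_D hf]
  rfl

/-- telescoping sum -/
lemma tsum_telescope (y : ℝ) (hy : 0 ≤ y) :
    ∑' m : ℕ, ENNReal.ofReal (1 / ((y + (m:ℝ) + 1) * (y + (m:ℝ) + 2) * Real.log 2))
      = ENNReal.ofReal (1 / ((1 + y) * Real.log 2)) := by
  have hlog : 0 < Real.log 2 := Real.log_pos one_lt_two
  set g : ℕ → ℝ := fun m => 1 / ((y + (m:ℝ) + 1) * Real.log 2) with hg
  have hpos : ∀ m : ℕ, (0:ℝ) < y + (m:ℝ) + 1 := fun m => by positivity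
  have hterm : ∀ m : ℕ, 1 / ((y + (m:ℝ) + 1) * (y + (m:ℝ) + 2) * Real.log 2)
      = g m - g (m + 1) := by
    intro m
    have h1 : (0:ℝ) < y + (m:ℝ) + 1 := hpos m
    have h2 : (0:ℝ) < y + (m:ℝ) + 2 := by positivity
    have : (y + ((m:ℕ):ℝ) + 1 + 1) = y + (m:ℝ) + 2 := by push_cast; ring
    rw [hg]; push_cast
    field_simp
    ring
  have hnonneg : ∀ m : ℕ, 0 ≤ 1 / ((y + (m:ℝ) + 1) * (y + (m:ℝ) + 2) * Real.log 2) := by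
    intro m
    have h1 : (0:ℝ) < y + (m:ℝ) + 1 := hpos m
    have h2 : (0:ℝ) < y + (m:ℝ) + 2 := by positivity
    positivity
  have hgtend : Tendsto g atTop (nhds 0) := by
    rw [hg]
    have h1 : Tendsto (fun m : ℕ => ((y + (m:ℝ) + 1) * Real.log 2)) atTop atTop := by
      apply Tendsto.atTop_mul_const hlog
      apply tendsto_atTop_add_const_right
      exact tendsto_atTop_add_const_left _ _ tendsto_natCast_atTop_atTop
    have h2 := h1.inv_tendsto_atTop
    have he : (fun m : ℕ => ((y + (m:ℝ) + 1) * Real.log 2))⁻¹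
        = fun m : ℕ => 1 / ((y + (m:ℝ) + 1) * Real.log 2) := by
      funext m; simp [one_div]
    rw [he] at h2
    exact h2
  have hsum : HasSum (fun m : ℕ => 1 / ((y + (m:ℝ) + 1) * (y + (m:ℝ) + 2) * Real.log 2))
      (g 0) := by
    rw [hasSum_iff_tendsto_nat_of_nonneg hnonneg]
    have : ∀ n : ℕ, ∑ i ∈ Finset.range n,
        1 / ((y + (i:ℝ) + 1) * (y + (i:ℝ) + 2) * Real.log 2) = g 0 - g n := by
      intro n
      rw [← Finset.sum_range_sub' g n]
      exact Finset.sum_congr rfl fun i _ => hterm i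
    simp only [this]
    simpa using tendsto_const_nhds.sub hgtend
  rw [← ENNReal.ofReal_tsum_of_nonneg hnonneg hsum.summable, hsum.tsum_eq]
  congr 1
  rw [hg]
  norm_num
  ring

lemma lintegral_image_1d {s : Set ℝ} {f f' : ℝ → ℝ} (hs : MeasurableSet s)
    (hf' : ∀ x ∈ s, HasDerivWithinAt f (f' x) s x) (hf : InjOn f s) (g : ℝ → ℝ≥0∞) :
    ∫⁻ x in f '' s, g x = ∫⁻ x in s, ENNReal.ofReal |f' x| * g (f x) := by
  simpa only [ContinuousLinearMap.det_toSpanSingleton] using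
    lintegral_image_eq_lintegral_abs_det_fderiv_mul volume hs
      (fun x hx => (hf' x hx).hasFDerivWithinAt) hf g

lemma gauss_branch (m : ℕ) (f : ℝ → ℝ≥0∞) :
    ∫⁻ x in Ioo (1/((m:ℝ)+2)) (1/((m:ℝ)+1)),
        ENNReal.ofReal (1 / ((1 + x) * Real.log 2)) * f (gaussMap x)
      = ∫⁻ y in Ioo (0:ℝ) 1,
          ENNReal.ofReal (1/((y+(m:ℝ)+1)*(y+(m:ℝ)+2)*Real.log 2)) * f y := by
  have hlog : 0 < Real.log 2 := Real.log_pos one_lt_two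
  set b : ℝ := (m:ℝ) + 1 with hb
  have hm0 : (0:ℝ) ≤ (m:ℝ) := Nat.cast_nonneg m
  have hb1 : (1:ℝ) ≤ b := by rw [hb]; linarith
  have hbpos : (0:ℝ) < b := by linarith
  have himg : (fun y : ℝ => (y + b)⁻¹) '' Ioo 0 1 = Ioo (1/(b+1)) (1/b) := by
    ext x
    constructor
    · rintro ⟨y, ⟨hy0, hy1⟩, rfl⟩
      have hyb : (0:ℝ) < y + b := by linarith
      constructor
      · rw [one_div]
        exact inv_strictAnti₀ hyb (by linarith)
      · rw [one_div]
        exact inv_strictAnti₀ hbpos (by linarith)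
    · rintro ⟨h1, h2⟩
      have hx0 : 0 < x := lt_trans (by positivity) h1
      have hxinv1 : 1/x < b + 1 := by
        rw [div_lt_iff₀ hx0]
        have := (div_lt_iff₀ (by positivity : (0:ℝ) < b+1)).mp h1
        nlinarith
      have hxinv2 : b < 1/x := by
        rw [lt_div_iff₀ hx0]
        have := (lt_div_iff₀ hbpos).mp h2
        nlinarith
      refine ⟨1/x - b, ⟨by linarith, by linarith⟩, ?_⟩
      rw [one_div]
      simp [inv_inv, ne_of_gt hx0]
  have hderiv : ∀ y ∈ Ioo (0:ℝ) 1,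
      HasDerivWithinAt (fun y : ℝ => (y + b)⁻¹) (-1 / (y+b)^2) (Ioo (0:ℝ) 1) y := by
    intro y hy
    have h : HasDerivAt (fun y : ℝ => (y + b)⁻¹) (-1 / (y+b)^2) y := by
      have h0 := ((hasDerivAt_id y).add_const b).inv (by nlinarith [hy.1] : y + b ≠ 0)
      convert h0 using 1 <;> rfl
    exact h.hasDerivWithinAt
  have hinj : InjOn (fun y : ℝ => (y + b)⁻¹) (Ioo (0:ℝ) 1) := by
    intro y1 _ y2 _ h
    have := inv_injective h
    linarith [this]
  have key := lintegral_image_1d measurableSet_Ioo hderiv hinj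
    (fun x => ENNReal.ofReal (1 / ((1 + x) * Real.log 2)) * f (gaussMap x))
  rw [himg] at key
  rw [show Ioo (1/((m:ℝ)+2)) (1/((m:ℝ)+1)) = Ioo (1/(b+1)) (1/b) by rw [hb]; ring_nf]
  rw [key]
  apply setLIntegral_congr_fun measurableSet_Ioo
  intro y hy
  beta_reduce
  obtain ⟨hy0, hy1⟩ := hy
  have hyb : (0:ℝ) < y + b := by linarith
  have hgm : gaussMap ((y+b)⁻¹) = y := by
    rw [gaussMap, one_div, inv_inv]
    have hfl : ⌊y + b⌋ = (m:ℤ) + 1 := by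
      have h0 : ⌊y⌋ = 0 := Int.floor_eq_zero_iff.mpr ⟨hy0.le, hy1⟩
      have he : y + b = y + (((m:ℤ) + 1 : ℤ) : ℝ) := by rw [hb]; push_cast; ring
      rw [he, Int.floor_add_intCast, h0, zero_add]
    rw [hfl]
    rw [hb]; push_cast; ring
  rw [hgm]
  have habs : |(-1 / (y+b)^2)| = 1 / (y+b)^2 := by
    rw [abs_div, abs_neg, abs_one, abs_of_nonneg (sq_nonneg _)]
  rw [habs, ← mul_assoc, ← ENNReal.ofReal_mul (by positivity)]
  congr 2
  have hy2 : (0:ℝ) < 1 + (y+b)⁻¹ := by positivity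
  have e1 : y + (m:ℝ) + 1 = y + b := by rw [hb]; ring
  have e2 : y + (m:ℝ) + 2 = y + b + 1 := by rw [hb]; ring
  rw [e1, e2]
  field_simp

lemma gauss_invariant (f : ℝ → ℝ≥0∞) (hf : Measurable f) :
    ∫⁻ ω, f (gaussMap ω) ∂gaussMeasure = ∫⁻ ω, f ω ∂gaussMeasure := by
  have hL := lintegral_gauss (fun ω => f (gaussMap ω)) (hf.comp measurable_gaussMap)
  rw [hL, lintegral_gauss f hf]
  set S : ℕ → Set ℝ := fun m => Ioo (1/((m:ℝ)+2)) (1/((m:ℝ)+1)) with hS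
  have hsub : (⋃ m : ℕ, S m) ⊆ Ioo (0:ℝ) 1 := by
    intro x hx
    simp only [hS, mem_iUnion, mem_Ioo] at hx
    obtain ⟨m, h1, h2⟩ := hx
    have hm0 : (0:ℝ) ≤ (m:ℝ) := Nat.cast_nonneg m
    refine ⟨lt_trans (by positivity) h1, lt_of_lt_of_le h2 ?_⟩
    rw [div_le_one (by positivity)]
    linarith
  have hdiff : Ioo (0:ℝ) 1 \ (⋃ m : ℕ, S m) ⊆ range (fun m : ℕ => 1/((m:ℝ)+1)) := by
    rintro x ⟨⟨hx0, hx1⟩, hx⟩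
    have h1x : 1 < 1/x := one_lt_one_div hx0 hx1
    set b : ℤ := ⌊1/x⌋ with hbdef
    have hb1 : 1 ≤ b := Int.le_floor.mpr (by exact_mod_cast h1x.le)
    have hb1R : (1:ℝ) ≤ (b:ℝ) := by exact_mod_cast hb1
    have hble : (b:ℝ) ≤ 1/x := Int.floor_le _
    have hblt : 1/x < (b:ℝ) + 1 := Int.lt_floor_add_one _
    have hcast : (((b-1).toNat : ℕ) : ℝ) = (b:ℝ) - 1 := by
      have h := Int.toNat_of_nonneg (by omega : (0:ℤ) ≤ b - 1)
      exact_mod_cast congrArg (Int.cast : ℤ → ℝ) h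
    by_cases hcase : (b:ℝ) = 1/x
    · refine ⟨(b-1).toNat, ?_⟩
      simp only [hcast]
      rw [show (b:ℝ) - 1 + 1 = (b:ℝ) by ring, hcase, one_div_one_div]
    · exfalso
      apply hx
      refine mem_iUnion.mpr ⟨(b-1).toNat, ?_⟩
      have hblt' : (b:ℝ) < 1/x := lt_of_le_of_ne hble hcase
      simp only [hS, mem_Ioo, hcast]
      constructor
      · rw [show (b:ℝ) - 1 + 2 = (b:ℝ) + 1 by ring,
          div_lt_iff₀ (by linarith : (0:ℝ) < (b:ℝ) + 1)]
        have := (div_lt_iff₀ hx0).mp hblt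
        nlinarith
      · rw [show (b:ℝ) - 1 + 1 = (b:ℝ) by ring, lt_div_iff₀ (by linarith : (0:ℝ) < (b:ℝ))]
        have := (lt_div_iff₀ hx0).mp hblt'
        nlinarith
  have hae : (Ioo (0:ℝ) 1 : Set ℝ) =ᵐ[volume] ⋃ m : ℕ, S m := by
    rw [MeasureTheory.ae_eq_set]
    constructor
    · exact measure_mono_null hdiff ((countable_range _).measure_zero _)
    · rw [diff_eq_empty.mpr hsub, measure_empty]
  have hres : volume.restrict (Ioo (0:ℝ) 1) = volume.restrict (⋃ m : ℕ, S m) :=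
    Measure.restrict_congr_set hae
  rw [hres]
  have hdisj : Pairwise (Function.onFun Disjoint S) := by
    have key : ∀ i j : ℕ, i < j → Disjoint (S i) (S j) := by
      intro i j h
      have hij : (i:ℝ) + 1 ≤ (j:ℝ) := by exact_mod_cast h
      apply Set.Ioo_disjoint_Ioo.mpr
      have hj0 : (0:ℝ) ≤ (j:ℝ) := Nat.cast_nonneg j
      have hle : (1:ℝ)/((j:ℝ)+2) ≤ 1/((i:ℝ)+1) := by
        apply one_div_le_one_div_of_le (by positivity)
        linarith
      calc min (1/((i:ℝ)+1)) (1/((j:ℝ)+1)) ≤ 1/((j:ℝ)+1) := min_le_right _ _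
        _ ≤ max (1/((i:ℝ)+2)) (1/((j:ℝ)+2)) := by
            apply le_trans _ (le_max_left _ _)
            apply one_div_le_one_div_of_le (by positivity)
            linarith
    intro i j hij
    rcases hij.lt_or_gt with h | h
    · exact key i j h
    · exact (key j i h).symm
  rw [lintegral_iUnion (fun m => measurableSet_Ioo) hdisj]
  rw [tsum_congr (fun m => gauss_branch m f)]
  have hmeas : ∀ m : ℕ, AEMeasurable
      (fun y => ENNReal.ofReal (1/((y+(m:ℝ)+1)*(y+(m:ℝ)+2)*Real.log 2)) * f y)
      (volume.restrict (Ioo (0:ℝ) 1)) := by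
    intro m
    apply Measurable.aemeasurable
    apply Measurable.mul _ hf
    apply ENNReal.measurable_ofReal.comp
    apply Measurable.div measurable_const
    apply Measurable.mul _ measurable_const
    exact (((measurable_id.add_const _).add_const _).mul
      ((measurable_id.add_const _).add_const _))
  rw [← lintegral_tsum hmeas, ← hres]
  apply setLIntegral_congr_fun measurableSet_Ioo
  intro y hy
  beta_reduce
  rw [ENNReal.tsum_mul_right, tsum_telescope y hy.1.le]

lemma gauss_invariant_iterate (f : ℝ → ℝ≥0∞) (hf : Measurable f) (m : ℕ) :
    ∫⁻ ω, f (gaussMap^[m] ω) ∂gaussMeasure = ∫⁻ ω, f ω ∂gaussMeasure := by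
  induction m with
  | zero => simp
  | succ m ih =>
    simp only [Function.iterate_succ_apply]
    exact (gauss_invariant (fun x => f (gaussMap^[m] x))
      (hf.comp (measurable_gaussMap.iterate m))).trans ih

lemma lintegral_neg_log_pow (k : ℕ) :
    ∫⁻ x in Ioo (0:ℝ) 1, ENNReal.ofReal ((-Real.log x)^k)
      = ENNReal.ofReal (k.factorial : ℝ) := by
  have himg : (fun t : ℝ => Real.exp (-t)) '' Ioi 0 = Ioo (0:ℝ) 1 := by
    ext x
    constructor
    · rintro ⟨t, ht, rfl⟩
      refine ⟨Real.exp_pos _, ?_⟩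
      rw [← Real.exp_zero]
      exact Real.exp_lt_exp.mpr (by simpa using mem_Ioi.mp ht)
    · rintro ⟨h0, h1⟩
      refine ⟨-Real.log x, ?_, by simp [Real.exp_log h0]⟩
      simp only [mem_Ioi]
      have := Real.log_neg h0 h1
      linarith
  have hderiv : ∀ t ∈ Ioi (0:ℝ), HasDerivWithinAt (fun t : ℝ => Real.exp (-t))
      (-Real.exp (-t)) (Ioi (0:ℝ)) t := by
    intro t _
    have h : HasDerivAt (fun t : ℝ => Real.exp (-t)) (Real.exp (-t) * (-1)) t :=
      (Real.hasDerivAt_exp (-t)).comp t (hasDerivAt_neg t)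
    simpa [mul_comm] using h.hasDerivWithinAt
  have hinj : InjOn (fun t : ℝ => Real.exp (-t)) (Ioi (0:ℝ)) := by
    intro a _ b _ h
    have := Real.exp_injective h
    exact neg_injective this
  rw [← himg, lintegral_image_1d measurableSet_Ioi hderiv hinj]
  have hcong : ∀ t ∈ Ioi (0:ℝ),
      ENNReal.ofReal |(-Real.exp (-t))| * ENNReal.ofReal ((-Real.log (Real.exp (-t)))^k)
        = ENNReal.ofReal (Real.exp (-t) * t^k) := by
    intro t _
    rw [abs_neg, abs_of_nonneg (Real.exp_nonneg _), Real.log_exp, neg_neg,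
      ENNReal.ofReal_mul (Real.exp_nonneg _)]
  rw [setLIntegral_congr_fun measurableSet_Ioi hcong]
  have hint : IntegrableOn (fun t : ℝ => Real.exp (-t) * t^k) (Ioi (0:ℝ)) := by
    have h := Real.GammaIntegral_convergent (by positivity : (0:ℝ) < (k:ℝ) + 1)
    apply h.congr_fun ?_ measurableSet_Ioi
    intro x _
    have he : ((k:ℝ) + 1 - 1) = (k:ℝ) := by ring
    simp [he, Real.rpow_natCast]
  have hnn : 0 ≤ᵐ[volume.restrict (Ioi (0:ℝ))] fun t : ℝ => Real.exp (-t) * t^k := by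
    rw [EventuallyLE, ae_restrict_iff' measurableSet_Ioi]
    apply Filter.Eventually.of_forall
    intro t ht
    have := mem_Ioi.mp ht
    positivity
  rw [← MeasureTheory.ofReal_integral_eq_lintegral_ofReal hint hnn]
  congr 1
  have h1 := Real.Gamma_eq_integral (show (0:ℝ) < (k:ℝ) + 1 by positivity)
  have h2 : ∫ x in Ioi (0:ℝ), Real.exp (-x) * x ^ (((k:ℝ)+1)-1)
      = ∫ x in Ioi (0:ℝ), Real.exp (-x) * x ^ k := by
    apply setIntegral_congr_fun measurableSet_Ioi
    intro x _
    have he : ((k:ℝ) + 1 - 1) = (k:ℝ) := by ring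
    simp [he, Real.rpow_natCast]
  rw [h2] at h1
  rw [← h1]
  exact_mod_cast Real.Gamma_nat_eq_factorial k


theorem moment_estimate_Xn (k : ℕ) (hk : 2 ≤ k) (n : ℕ) (hn : 1 ≤ n) :
    (∫ ω, |Xlog ω n| ^ k ∂gaussMeasure) ≤ 3 / (2 * Real.log 2) * (k.factorial : ℝ)
    ∧ (∫ ω, |Xlog ω n| ^ k ∂gaussMeasure) ≤ (k.factorial : ℝ) * rbar ^ k := by
  have hlog : 0 < Real.log 2 := Real.log_pos one_lt_two
  have h2L : (0:ℝ) < 2 * Real.log 2 := by linarith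
  have hfk : (0:ℝ) ≤ (k.factorial : ℝ) := by positivity
  -- the function h
  set g : ℝ → ℝ≥0∞ := fun x => ENNReal.ofReal (|Real.log ((⌊1/x⌋ : ℤ) : ℝ)| ^ k) with hgdef
  have hmeas1 : Measurable fun x : ℝ => ((⌊1/x⌋ : ℤ) : ℝ) :=
    measurable_from_top.comp (measurable_const.div measurable_id).floor
  have hg : Measurable g :=
    ENNReal.measurable_ofReal.comp ((Real.measurable_log.comp hmeas1).abs.pow_const k)
  have hXmeas : Measurable fun ω => |Xlog ω n| ^ k := by
    apply Measurable.pow_const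
    apply Measurable.abs
    apply Real.measurable_log.comp
    exact measurable_from_top.comp
      ((measurable_const.div (measurable_gaussMap.iterate (n-1))).floor)
  -- rewrite integral as lintegral
  have step1 : (∫ ω, |Xlog ω n| ^ k ∂gaussMeasure)
      = (∫⁻ ω, g (gaussMap^[n-1] ω) ∂gaussMeasure).toReal := by
    rw [integral_eq_lintegral_of_nonneg_ae
      (Filter.Eventually.of_forall fun ω => by positivity) hXmeas.aestronglyMeasurable]
    rfl
  have step2 : ∫⁻ ω, g (gaussMap^[n-1] ω) ∂gaussMeasure = ∫⁻ ω, g ω ∂gaussMeasure :=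
    gauss_invariant_iterate g hg (n-1)
  have step3 : ∫⁻ ω, g ω ∂gaussMeasure ≤ ENNReal.ofReal ((k.factorial : ℝ) / Real.log 2) := by
    rw [lintegral_gauss g hg]
    calc ∫⁻ x in Ioo (0:ℝ) 1, ENNReal.ofReal (1 / ((1 + x) * Real.log 2)) * g x
        ≤ ∫⁻ x in Ioo (0:ℝ) 1,
            ENNReal.ofReal (1/Real.log 2) * ENNReal.ofReal ((-Real.log x)^k) := by
          apply setLIntegral_mono
          · exact (ENNReal.measurable_ofReal.comp
              ((Real.measurable_log.neg).pow_const k)).const_mul _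
          · intro x hx
            obtain ⟨hx0, hx1⟩ := hx
            have hd : 1 / ((1 + x) * Real.log 2) ≤ 1 / Real.log 2 := by
              apply one_div_le_one_div_of_le hlog
              nlinarith
            have h1x : (1:ℝ) ≤ 1/x := by rw [le_div_iff₀ hx0]; linarith
            have hfl : (1:ℤ) ≤ ⌊1/x⌋ := Int.le_floor.mpr (by exact_mod_cast h1x)
            have hflR : (1:ℝ) ≤ ((⌊1/x⌋ : ℤ) : ℝ) := by exact_mod_cast hfl
            have hlnn : 0 ≤ Real.log ((⌊1/x⌋ : ℤ) : ℝ) := Real.log_nonneg hflR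
            have hle : Real.log ((⌊1/x⌋ : ℤ) : ℝ) ≤ -Real.log x := by
              rw [← Real.log_inv, ← one_div]
              exact Real.log_le_log (by linarith) (Int.floor_le _)
            have hh : |Real.log ((⌊1/x⌋ : ℤ) : ℝ)| ^ k ≤ (-Real.log x)^k := by
              rw [abs_of_nonneg hlnn]
              exact pow_le_pow_left₀ hlnn hle k
            exact mul_le_mul' (ENNReal.ofReal_le_ofReal hd) (ENNReal.ofReal_le_ofReal hh)
      _ = ENNReal.ofReal (1/Real.log 2)
            * ∫⁻ x in Ioo (0:ℝ) 1, ENNReal.ofReal ((-Real.log x)^k) :=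
          lintegral_const_mul' _ _ ENNReal.ofReal_ne_top
      _ = ENNReal.ofReal (1/Real.log 2) * ENNReal.ofReal (k.factorial : ℝ) := by
          rw [lintegral_neg_log_pow]
      _ = ENNReal.ofReal ((k.factorial : ℝ) / Real.log 2) := by
          rw [← ENNReal.ofReal_mul (by positivity)]
          congr 1
          ring
  have hmain : (∫ ω, |Xlog ω n| ^ k ∂gaussMeasure) ≤ (k.factorial : ℝ) / Real.log 2 := by
    rw [step1, step2]
    exact ENNReal.toReal_le_of_le_ofReal (by positivity) step3
  have hb1 : (k.factorial : ℝ) / Real.log 2 ≤ 3 / (2 * Real.log 2) * (k.factorial : ℝ) := by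
    rw [div_le_iff₀ hlog, div_mul_eq_mul_div, div_mul_eq_mul_div, le_div_iff₀ h2L]
    nlinarith
  have first : (∫ ω, |Xlog ω n| ^ k ∂gaussMeasure) ≤ 3 / (2 * Real.log 2) * (k.factorial : ℝ) :=
    le_trans hmain hb1
  refine ⟨first, le_trans first ?_⟩
  have hnn : (0:ℝ) ≤ 3 / (2 * Real.log 2) := by positivity
  have hr2 : rbar ^ 2 = 3 / (2 * Real.log 2) := Real.sq_sqrt hnn
  have hr1 : (1:ℝ) ≤ rbar := by
    rw [rbar, show (1:ℝ) = Real.sqrt 1 by simp]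
    apply Real.sqrt_le_sqrt
    rw [le_div_iff₀ h2L]
    have := Real.log_two_lt_d9
    nlinarith
  have hpow : rbar ^ 2 ≤ rbar ^ k := pow_le_pow_right₀ hr1 hk
  calc 3 / (2 * Real.log 2) * (k.factorial : ℝ) = rbar ^ 2 * (k.factorial : ℝ) := by rw [hr2]
    _ ≤ rbar ^ k * (k.factorial : ℝ) := mul_le_mul_of_nonneg_right hpow hfk
    _ = (k.factorial : ℝ) * rbar ^ k := mul_comm _ _
end

section
/- For every integer N ≥ 2 and every real α > 0, with K = ⌈√N⌉, one has Σ_{n=N}^∞ e^{−α√n} ≤ Σ_{n=N}^{K²−1} e^{−α√n} + (e^{−αK}/(1 − e^{−α}))·(2K + 1 + 4e^{−α}/(1 − e^{−α})); in particular, when N = K² is a square of an integer, Σ_{n=N}^∞ e^{−α√n} ≤ (e^{−αK}/(1 − e^{−α}))·(2K + 1 + 4e^{−α}/(1 − e^{−α})). -/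
open Real

private lemma sqrt_block (K j i : ℕ) (hi : i < 2*(K+j)+1) :
    Nat.sqrt ((K+j)^2 + i) = K + j := by
  apply le_antisymm
  · have h2 : (K+j)^2 + i < (K+j+1)^2 := by nlinarith
    exact Nat.lt_succ_iff.mp (Nat.sqrt_lt'.mpr h2)
  · exact Nat.le_sqrt'.mpr (Nat.le_add_right _ _)

def blockEquiv (K : ℕ) : (Σ j : ℕ, Fin (2*(K+j)+1)) ≃ ℕ where
  toFun p := (K + p.1)^2 + p.2.1 - K^2
  invFun k := ⟨Nat.sqrt (K^2 + k) - K,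
    ⟨K^2 + k - (Nat.sqrt (K^2 + k))^2, by
      have h1 : (Nat.sqrt (K^2+k))^2 ≤ K^2 + k := Nat.sqrt_le' _
      have h2 : K^2 + k < (Nat.sqrt (K^2+k) + 1)^2 := Nat.lt_succ_sqrt' _
      have h3 : K ≤ Nat.sqrt (K^2+k) := Nat.le_sqrt'.mpr (Nat.le_add_right _ _)
      have e1 : (Nat.sqrt (K^2+k) + 1)^2 = (Nat.sqrt (K^2+k))^2 + 2*Nat.sqrt (K^2+k) + 1 := by
        ring
      omega⟩⟩
  left_inv := by
    rintro ⟨j, i⟩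
    have hK2 : K^2 ≤ (K+j)^2 := Nat.pow_le_pow_left (Nat.le_add_right _ _) _
    have hk : K^2 + ((K + j)^2 + i.1 - K^2) = (K+j)^2 + i.1 := by omega
    have hs : Nat.sqrt (K^2 + ((K + j)^2 + i.1 - K^2)) = K + j := by
      rw [hk]; exact sqrt_block K j i.1 i.2
    have hj : Nat.sqrt (K^2 + ((K + j)^2 + i.1 - K^2)) - K = j := by omega
    refine Sigma.ext hj ?_
    refine (Fin.heq_ext_iff ?_).mpr ?_
    · show 2*(K + (Nat.sqrt (K^2 + ((K + j)^2 + i.1 - K^2)) - K)) + 1 = 2*(K+j)+1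
      rw [hj]
    show K^2 + ((K + j)^2 + i.1 - K^2) - (Nat.sqrt (K^2 + ((K + j)^2 + i.1 - K^2)))^2 = i.1
    rw [hs, hk]
    omega
  right_inv := by
    intro k
    have h1 : (Nat.sqrt (K^2+k))^2 ≤ K^2 + k := Nat.sqrt_le' _
    have h3 : K ≤ Nat.sqrt (K^2+k) := Nat.le_sqrt'.mpr (Nat.le_add_right _ _)
    simp only
    have he : (K + (Nat.sqrt (K^2+k) - K))^2 = (Nat.sqrt (K^2+k))^2 := by
      congr 1; omega
    rw [he]; omega

set_option maxHeartbeats 1000000 in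
lemma tail_bound (K : ℕ) (α : ℝ) (hα : 0 < α) :
    Summable (fun k : ℕ => Real.exp (-α * Real.sqrt (((K:ℝ))^2 + k))) ∧
    (∑' k : ℕ, Real.exp (-α * Real.sqrt (((K:ℝ))^2 + k)))
      ≤ Real.exp (-α * K) / (1 - Real.exp (-α))
          * (2 * (K : ℝ) + 1 + 4 * Real.exp (-α) / (1 - Real.exp (-α))) := by
  set q : ℝ := Real.exp (-α) with hq
  have hq0 : 0 < q := Real.exp_pos _
  have hq1 : q < 1 := Real.exp_lt_one_iff.mpr (by linarith)
  have h1q : 0 < 1 - q := by linarith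
  set f : ℕ → ℝ := fun k => Real.exp (-α * Real.sqrt (((K:ℝ))^2 + k)) with hf
  have key : ∀ p : Σ j : ℕ, Fin (2*(K+j)+1), f (blockEquiv K p) ≤ q^(K + p.1) := by
    rintro ⟨j, i⟩
    have hbe : (blockEquiv K) ⟨j, i⟩ = (K + j)^2 + i.1 - K^2 := rfl
    have hK2 : K^2 ≤ (K+j)^2 + i.1 :=
      le_trans (Nat.pow_le_pow_left (Nat.le_add_right _ _) _) (Nat.le_add_right _ _)
    have harg : ((K:ℝ))^2 + (((K + j)^2 + i.1 - K^2 : ℕ) : ℝ) = ((K:ℝ)+j)^2 + i.1 := by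
      push_cast [Nat.cast_sub hK2]; ring
    show f ((blockEquiv K) ⟨j, i⟩) ≤ q^(K + j)
    rw [hbe, hf]
    simp only []
    rw [harg]
    have hsq : ((K:ℝ)+(j:ℝ)) ≤ Real.sqrt (((K:ℝ)+j)^2 + i.1) := by
      have h0 : ((K:ℝ)+j)^2 ≤ ((K:ℝ)+j)^2 + i.1 := by
        have : (0:ℝ) ≤ (i.1:ℝ) := Nat.cast_nonneg _
        linarith
      have h := Real.sqrt_le_sqrt h0
      rwa [Real.sqrt_sq (by positivity)] at h
    have hmul := mul_le_mul_of_nonneg_left hsq hα.le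
    have hle : Real.exp (-α * Real.sqrt (((K:ℝ)+j)^2 + i.1)) ≤ Real.exp (-α*((K:ℝ)+j)) :=
      Real.exp_le_exp.mpr (by nlinarith)
    refine hle.trans (le_of_eq ?_)
    rw [hq, ← Real.exp_nat_mul]
    congr 1; push_cast; ring
  set g : (Σ j : ℕ, Fin (2*(K+j)+1)) → ℝ := fun p => q^(K + p.1) with hg
  have h1 : Summable (fun j : ℕ => (j:ℝ) * q^j) := by
    have := summable_pow_mul_geometric_of_norm_lt_one (R := ℝ) 1
      (r := q) (by rw [Real.norm_eq_abs, abs_of_pos hq0]; exact hq1)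
    simpa using this
  have h2 : Summable (fun j : ℕ => q^j) := summable_geometric_of_lt_one hq0.le hq1
  have hsumrow : Summable (fun j : ℕ => (2*(K:ℝ)+2*j+1) * q^(K+j)) := by
    have hs : Summable (fun j : ℕ => q^K * ((2*(K:ℝ)+1) * q^j + 2 * ((j:ℝ) * q^j))) :=
      (((h2.mul_left _).add (h1.mul_left 2)).mul_left _)
    apply hs.congr
    intro j
    rw [pow_add]
    ring
  have hrow : ∀ j : ℕ, (∑' i : Fin (2*(K+j)+1), g ⟨j, i⟩) = (2*(K:ℝ)+2*j+1) * q^(K+j) := by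
    intro j
    rw [tsum_fintype]
    simp only [hg]
    rw [Finset.sum_const, Finset.card_univ, Fintype.card_fin, nsmul_eq_mul]
    push_cast
    ring
  have hgsum : Summable g := by
    rw [summable_sigma_of_nonneg (fun p => by positivity)]
    constructor
    · intro j; exact (hasSum_fintype _).summable
    · apply hsumrow.congr
      intro j
      exact (hrow j).symm
  have hfsum' : Summable (fun p : Σ j : ℕ, Fin (2*(K+j)+1) => f ((blockEquiv K) p)) :=
    Summable.of_nonneg_of_le (fun p => (Real.exp_pos _).le) key hgsum
  have hfsum : Summable f := ((blockEquiv K).summable_iff (f := f)).mp hfsum'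
  refine ⟨hfsum, ?_⟩
  have step1 : (∑' k : ℕ, f k) ≤ ∑' p, g p := by
    rw [← (blockEquiv K).tsum_eq f]
    exact Summable.tsum_le_tsum key hfsum' hgsum
  have step2 : (∑' p, g p) = ∑' j : ℕ, (2*(K:ℝ)+2*j+1) * q^(K+j) := by
    rw [Summable.tsum_sigma hgsum]
    exact tsum_congr hrow
  have step3 : (∑' j : ℕ, (2*(K:ℝ)+2*j+1) * q^(K+j))
      = q^K * ((2*(K:ℝ)+1) * (1-q)⁻¹ + 2 * (q/(1-q)^2)) := by
    have e : (fun j : ℕ => (2*(K:ℝ)+2*j+1) * q^(K+j))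
        = fun j : ℕ => q^K * ((2*(K:ℝ)+1) * q^j) + q^K * (2 * ((j:ℝ) * q^j)) := by
      funext j; rw [pow_add]; ring
    rw [e, Summable.tsum_add ((h2.mul_left _).mul_left _) ((h1.mul_left _).mul_left _),
      tsum_mul_left, tsum_mul_left, tsum_mul_left, tsum_mul_left,
      tsum_geometric_of_lt_one hq0.le hq1,
      tsum_coe_mul_geometric_of_norm_lt_one
        (by rw [Real.norm_eq_abs, abs_of_pos hq0]; exact hq1)]
    ring
  have hqK : Real.exp (-α * K) = q^K := by
    rw [hq, ← Real.exp_nat_mul]; congr 1; ring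
  rw [hqK]
  calc (∑' k : ℕ, f k) ≤ q^K * ((2*(K:ℝ)+1) * (1-q)⁻¹ + 2 * (q/(1-q)^2)) := by
        rw [← step3, ← step2]; exact step1
    _ ≤ q^K / (1-q) * (2*(K:ℝ)+1 + 4*q/(1-q)) := by
        rw [div_mul_eq_mul_div, mul_div_assoc]
        apply mul_le_mul_of_nonneg_left _ (by positivity)
        have e1 : (2*(K:ℝ)+1 + 4*q/(1-q)) / (1-q)
            = (2*(K:ℝ)+1)*(1-q)⁻¹ + 4*(q/(1-q)^2) := by
          field_simp
        rw [e1]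
        have h4 : 2 * (q/(1-q)^2) ≤ 4 * (q/(1-q)^2) := by
          have : (0:ℝ) ≤ q/(1-q)^2 := by positivity
          linarith
        linarith

theorem sum_exp_neg_alpha_sqrt (N : ℕ) (hN : 2 ≤ N) (α : ℝ) (hα : 0 < α)
    (K : ℕ) (hK : K = ⌈Real.sqrt N⌉₊) :
    (∑' k : ℕ, Real.exp (-α * Real.sqrt ((N : ℝ) + k))
        ≤ ∑ n ∈ Finset.Ico N (K ^ 2), Real.exp (-α * Real.sqrt (n : ℝ))
          + Real.exp (-α * K) / (1 - Real.exp (-α))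
            * (2 * (K : ℝ) + 1 + 4 * Real.exp (-α) / (1 - Real.exp (-α))))
    ∧ (N = K ^ 2 →
        ∑' k : ℕ, Real.exp (-α * Real.sqrt ((N : ℝ) + k))
          ≤ Real.exp (-α * K) / (1 - Real.exp (-α))
            * (2 * (K : ℝ) + 1 + 4 * Real.exp (-α) / (1 - Real.exp (-α)))) := by
  have hNK : N ≤ K^2 := by
    have h1 : Real.sqrt N ≤ (K : ℝ) := by rw [hK]; exact Nat.le_ceil _
    have h2 : (N : ℝ) ≤ ((K^2 : ℕ) : ℝ) := by
      push_cast
      nlinarith [Real.sq_sqrt (Nat.cast_nonneg N : (0:ℝ) ≤ (N:ℝ)), Real.sqrt_nonneg (N:ℝ)]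
    exact_mod_cast h2
  obtain ⟨htsum, htail⟩ := tail_bound K α hα
  set f : ℕ → ℝ := fun k => Real.exp (-α * Real.sqrt ((N : ℝ) + k)) with hfdef
  have hshift : ∀ k : ℕ, f (k + (K^2 - N)) = Real.exp (-α * Real.sqrt (((K:ℝ))^2 + k)) := by
    intro k
    simp only [hfdef]
    congr 2
    push_cast [Nat.cast_sub hNK]
    ring
  have hfsum : Summable f := by
    rw [← summable_nat_add_iff (K^2 - N)]
    exact htsum.congr fun k => (hshift k).symm
  have hsplit := Summable.sum_add_tsum_nat_add (f := f) (K^2 - N) hfsum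
  have hfin : (∑ i ∈ Finset.range (K^2 - N), f i)
      = ∑ n ∈ Finset.Ico N (K ^ 2), Real.exp (-α * Real.sqrt (n : ℝ)) := by
    rw [Finset.sum_Ico_eq_sum_range]
    apply Finset.sum_congr rfl
    intro i _
    simp only [hfdef]
    push_cast
    ring_nf
  have htail' : (∑' k : ℕ, f (k + (K^2 - N)))
      ≤ Real.exp (-α * K) / (1 - Real.exp (-α))
          * (2 * (K : ℝ) + 1 + 4 * Real.exp (-α) / (1 - Real.exp (-α))) := by
    calc (∑' k : ℕ, f (k + (K^2 - N)))
        = ∑' k : ℕ, Real.exp (-α * Real.sqrt (((K:ℝ))^2 + k)) := tsum_congr hshift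
      _ ≤ _ := htail
  constructor
  · rw [← hsplit, hfin]
    exact add_le_add_right htail' _
  · intro hNeq
    rw [← hsplit, hfin]
    have hemp : Finset.Ico N (K^2) = ∅ := by rw [hNeq]; simp
    rw [hemp, Finset.sum_empty, zero_add]
    exact htail'
end
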